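/- Let A be an M-graded normal domain (M a lattice) with weight cone σ^∨, and let L ⊆ M_ℚ be a polyhedral cone contained in σ^∨. Then the subalgebra A_L = ⊕_{m ∈ L ∩ M} A_m is normal (integrally closed in its fraction field). -/

import Mathlib

open scoped Pointwise

/-- The standard pairing between `M_ℚ` and `N_ℚ`, both identified with `Fin n → ℚ`. -/
def pairQ {n : ℕ} (m v : Fin n → ℚ) : ℚ := ∑ i, m i * v i

/-- The conical hull (set of nonnegative rational combinations) of a set. -/
def coneHull {n : ℕ} (S : Set (Fin n → ℚ)) : Set (Fin n → ℚ) :=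
  {v | ∃ (T : Finset (Fin n → ℚ)) (c : (Fin n → ℚ) → ℚ),
      ↑T ⊆ S ∧ (∀ x ∈ T, 0 ≤ c x) ∧ v = ∑ x ∈ T, c x • x}

/-- A polyhedral cone is the conical hull of a finite set. -/
def IsPolyhedralCone {n : ℕ} (σ : Set (Fin n → ℚ)) : Prop :=
  ∃ S : Finset (Fin n → ℚ), σ = coneHull ↑S

/-- A cone is strongly convex (pointed) if it contains no line. -/
def IsStronglyConvex {n : ℕ} (σ : Set (Fin n → ℚ)) : Prop :=
  ∀ v ∈ σ, -v ∈ σ → v = 0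

/-- The dual cone `σ^∨ ⊆ M_ℚ` of a cone `σ ⊆ N_ℚ`. -/
def dualCone {n : ℕ} (σ : Set (Fin n → ℚ)) : Set (Fin n → ℚ) :=
  {m | ∀ v ∈ σ, 0 ≤ pairQ m v}

/-- A `σ`-polyhedron: Minkowski sum of a (nonempty) polytope with the cone `σ`. -/
def IsSigmaPolyhedron {n : ℕ} (σ Δ : Set (Fin n → ℚ)) : Prop :=
  ∃ Q : Finset (Fin n → ℚ), Q.Nonempty ∧ Δ = convexHull ℚ ↑Q + σ

/-- Cast a lattice point of `ℤⁿ` into `ℚⁿ`. -/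
def castZ {n : ℕ} (m : Fin n → ℤ) : Fin n → ℚ := fun i => (m i : ℚ)

namespace Aux
variable {n : ℕ}

lemma pairQ_add_left (a b v : Fin n → ℚ) : pairQ (a + b) v = pairQ a v + pairQ b v := by
  simp [pairQ, add_mul, Finset.sum_add_distrib]

lemma pairQ_smul_left (c : ℚ) (a v : Fin n → ℚ) : pairQ (c • a) v = c * pairQ a v := by
  simp [pairQ, Finset.mul_sum, mul_assoc]

lemma pairQ_sub_left (a b v : Fin n → ℚ) : pairQ (a - b) v = pairQ a v - pairQ b v := by
  simp [pairQ, sub_mul, Finset.sum_sub_distrib]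

lemma pairQ_sub_right (a v w : Fin n → ℚ) : pairQ a (v - w) = pairQ a v - pairQ a w := by
  simp [pairQ, mul_sub, Finset.sum_sub_distrib]

lemma pairQ_smul_right (c : ℚ) (a v : Fin n → ℚ) : pairQ a (c • v) = c * pairQ a v := by
  simp [pairQ, Finset.mul_sum]; exact Finset.sum_congr rfl fun i _ => by ring

lemma pairQ_zero_left (v : Fin n → ℚ) : pairQ 0 v = 0 := by simp [pairQ]

lemma pairQ_self_neg (b : Fin n → ℚ) (hb : b ≠ 0) : pairQ b (-b) < 0 := by
  have h : pairQ b (-b) = -∑ i, b i * b i := by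
    simp [pairQ]
  have hpos : (0:ℚ) < ∑ i, b i * b i := by
    have hne : ∑ i, b i * b i ≠ 0 := by
      intro h0
      apply hb
      funext i
      exact mul_self_eq_zero.mp
        (((Finset.sum_eq_zero_iff_of_nonneg (fun i _ => mul_self_nonneg (b i))).mp h0) i
          (Finset.mem_univ i))
    exact lt_of_le_of_ne (Finset.sum_nonneg fun i _ => mul_self_nonneg (b i)) (Ne.symm hne)
  rw [h]
  linarith

-- closure properties
lemma mem_coneHull_of_mem {S : Set (Fin n → ℚ)} {x : Fin n → ℚ} (hx : x ∈ S) :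
    x ∈ coneHull S := by
  refine ⟨{x}, fun _ => 1, by simpa, by simp, by simp⟩

lemma zero_mem_coneHull (S : Set (Fin n → ℚ)) : (0 : Fin n → ℚ) ∈ coneHull S :=
  ⟨∅, fun _ => 0, by simp, by simp, by simp⟩

lemma coneHull_mono {S S' : Set (Fin n → ℚ)} (h : S ⊆ S') : coneHull S ⊆ coneHull S' := by
  rintro v ⟨T, c, hT, hc, rfl⟩
  exact ⟨T, c, hT.trans h, hc, rfl⟩

lemma smul_mem_coneHull {S : Set (Fin n → ℚ)} {x : Fin n → ℚ} (hx : x ∈ coneHull S)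
    {c : ℚ} (hc : 0 ≤ c) : c • x ∈ coneHull S := by
  obtain ⟨T, d, hT, hd, rfl⟩ := hx
  exact ⟨T, fun y => c * d y, hT, fun y hy => mul_nonneg hc (hd y hy),
    by rw [Finset.smul_sum]; exact Finset.sum_congr rfl fun y hy => (mul_smul c (d y) y).symm⟩

lemma add_mem_coneHull {S : Set (Fin n → ℚ)} {x y : Fin n → ℚ}
    (hx : x ∈ coneHull S) (hy : y ∈ coneHull S) : x + y ∈ coneHull S := by
  obtain ⟨T₁, c₁, hT₁, hc₁, rfl⟩ := hx
  obtain ⟨T₂, c₂, hT₂, hc₂, rfl⟩ := hy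
  classical
  refine ⟨T₁ ∪ T₂, fun z => (if z ∈ T₁ then c₁ z else 0) + (if z ∈ T₂ then c₂ z else 0),
    ?_, ?_, ?_⟩
  · rw [Finset.coe_union]; exact Set.union_subset hT₁ hT₂
  · intro z hz
    have : ∀ (P : Prop) [Decidable P] (c : ℚ), (∀ _ : P, 0 ≤ c) → 0 ≤ (if P then c else 0) := by
      intro P _ c h; split <;> simp_all
    exact add_nonneg (this _ _ fun h => hc₁ z h) (this _ _ fun h => hc₂ z h)
  · rw [Finset.sum_congr rfl (fun z _ => add_smul _ _ z), Finset.sum_add_distrib]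
    congr 1
    · rw [← Finset.sum_subset (Finset.subset_union_left (s₂ := T₂))]
      · exact Finset.sum_congr rfl fun z hz => by rw [if_pos hz]
      · intro z _ hz; rw [if_neg hz, zero_smul]
    · rw [← Finset.sum_subset (Finset.subset_union_right (s₁ := T₁))]
      · exact Finset.sum_congr rfl fun z hz => by rw [if_pos hz]
      · intro z _ hz; rw [if_neg hz, zero_smul]

lemma coneHull_subset {B S : Set (Fin n → ℚ)} (h : ∀ b ∈ B, b ∈ coneHull S) :
    coneHull B ⊆ coneHull S := by
  rintro v ⟨T, c, hT, hc, rfl⟩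
  refine Finset.sum_induction _ (· ∈ coneHull S) (fun a b ha hb => add_mem_coneHull ha hb)
    (zero_mem_coneHull S) (fun x hx => smul_mem_coneHull (h x (hT hx)) (hc x hx))

lemma pairQ_nonneg_of_mem_coneHull {S : Set (Fin n → ℚ)} {u v : Fin n → ℚ}
    (hu : u ∈ coneHull S) (hv : ∀ s ∈ S, 0 ≤ pairQ s v) : 0 ≤ pairQ u v := by
  obtain ⟨T, c, hT, hc, rfl⟩ := hu
  have : pairQ (∑ x ∈ T, c x • x) v = ∑ x ∈ T, c x * pairQ x v := by
    simp only [pairQ, Finset.sum_apply, Pi.smul_apply, smul_eq_mul, Finset.sum_mul,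
      Finset.mul_sum]
    rw [Finset.sum_comm]
    exact Finset.sum_congr rfl fun x _ => Finset.sum_congr rfl fun i _ => by ring
  rw [this]
  exact Finset.sum_nonneg fun x hx => mul_nonneg (hc x hx) (hv x (hT hx))

/-- Farkas' lemma over `ℚ`. -/
theorem farkas (Q : Finset (Fin n → ℚ)) (b : Fin n → ℚ) :
    b ∈ coneHull ↑Q ∨ ∃ v, (∀ u ∈ Q, 0 ≤ pairQ u v) ∧ pairQ b v < 0 := by
  classical
  obtain ⟨N, hN⟩ : ∃ N, Q.card ≤ N := ⟨Q.card, le_rfl⟩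
  induction N generalizing Q b with
  | zero =>
    have hQ : Q = ∅ := Finset.card_eq_zero.mp (Nat.le_zero.mp hN)
    subst hQ
    by_cases hb : b = 0
    · exact Or.inl (hb ▸ zero_mem_coneHull _)
    · exact Or.inr ⟨-b, by simp, pairQ_self_neg b hb⟩
  | succ N IH =>
    rcases Q.eq_empty_or_nonempty with hQ | ⟨a, ha⟩
    · subst hQ
      by_cases hb : b = 0
      · exact Or.inl (hb ▸ zero_mem_coneHull _)
      · exact Or.inr ⟨-b, by simp, pairQ_self_neg b hb⟩
    · set s := Q.erase a with hs
      have hQins : Q = insert a s := by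
        rw [hs, Finset.insert_erase ha]
      have hscard : s.card ≤ N := by
        rw [hs, Finset.card_erase_of_mem ha]
        omega
      rcases IH s b hscard with hb | ⟨v, hv, hbv⟩
      · left
        refine coneHull_mono ?_ hb
        rw [hs]
        exact_mod_cast Finset.erase_subset a Q
      · by_cases hav : 0 ≤ pairQ a v
        · refine Or.inr ⟨v, ?_, hbv⟩
          intro u hu
          rw [hQins] at hu
          rcases Finset.mem_insert.mp hu with rfl | hu
          · exact hav
          · exact hv u hu
        · push_neg at hav
          have hα : pairQ a v ≠ 0 := ne_of_lt hav
          set π : (Fin n → ℚ) → (Fin n → ℚ) :=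
            fun x => x - (pairQ x v / pairQ a v) • a with hπ
          rcases IH (s.image π) (π b) (le_trans Finset.card_image_le hscard) with hb' | ⟨v', hv', hb'v'⟩
          · left
            have haQ : a ∈ coneHull (↑Q : Set (Fin n → ℚ)) :=
              mem_coneHull_of_mem (by exact_mod_cast ha)
            have h1 : coneHull (↑(s.image π) : Set (Fin n → ℚ)) ⊆ coneHull ↑Q := by
              apply coneHull_subset
              intro y hy
              obtain ⟨x, hx, rfl⟩ := Finset.mem_coe.mp (by exact_mod_cast hy) |> Finset.mem_image.mp
              have hxQ : x ∈ coneHull (↑Q : Set (Fin n → ℚ)) :=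
                mem_coneHull_of_mem (by
                  rw [hQins]; exact_mod_cast Finset.mem_insert_of_mem hx)
              have hcoeff : 0 ≤ -(pairQ x v / pairQ a v) :=
                neg_nonneg.mpr (div_nonpos_of_nonneg_of_nonpos (hv x hx) hav.le)
              have : π x = x + (-(pairQ x v / pairQ a v)) • a := by
                rw [hπ]; rw [neg_smul, ← sub_eq_add_neg]
              rw [this]
              exact add_mem_coneHull hxQ (smul_mem_coneHull haQ hcoeff)
            have hb'Q := h1 hb'
            have hbeq : b = π b + (pairQ b v / pairQ a v) • a := by
              rw [hπ]; simp
            rw [hbeq]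
            exact add_mem_coneHull hb'Q
              (smul_mem_coneHull haQ (le_of_lt (div_pos_of_neg_of_neg hbv hav)))
          · right
            refine ⟨v' - (pairQ a v' / pairQ a v) • v, ?_, ?_⟩
            · intro u hu
              rw [hQins] at hu
              rcases Finset.mem_insert.mp hu with rfl | hu
              · rw [pairQ_sub_right, pairQ_smul_right, div_mul_cancel₀ _ hα, sub_self]
              · have h0 := hv' (π u) (Finset.mem_image_of_mem π hu)
                rw [hπ, pairQ_sub_left, pairQ_smul_left] at h0
                rw [pairQ_sub_right, pairQ_smul_right]
                have : pairQ u v' - pairQ a v' / pairQ a v * pairQ u v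
                    = pairQ u v' - pairQ u v / pairQ a v * pairQ a v' := by ring
                linarith [h0, this]
            · rw [hπ, pairQ_sub_left, pairQ_smul_left] at hb'v'
              rw [pairQ_sub_right, pairQ_smul_right]
              have : pairQ b v' - pairQ a v' / pairQ a v * pairQ b v
                  = pairQ b v' - pairQ b v / pairQ a v * pairQ a v' := by ring
              linarith [hb'v', this]

end Aux


namespace Aux2
variable {K₀ : Type*} [Field K₀] {n : ℕ}
local notation "G" => (Fin n → ℤ)
local notation "D" => AddMonoidAlgebra K₀ (Fin n → ℤ)

variable (w : (Fin n → ℤ) → ℚ)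

lemma mul_supp_lb (hwadd : ∀ a b, w (a + b) = w a + w b) (p q : D) (μp μq : ℚ)
    (hp : ∀ m ∈ p.coeff.support, μp ≤ w m) (hq : ∀ m ∈ q.coeff.support, μq ≤ w m) :
    ∀ m ∈ (p * q).coeff.support, μp + μq ≤ w m := by
  intro m hm
  obtain ⟨a, ha, b, hb, rfl⟩ := Finset.mem_add.mp (AddMonoidAlgebra.support_coeff_mul_subset p q hm)
  rw [hwadd]
  exact add_le_add (hp a ha) (hq b hb)

lemma mul_supp_attain (hwadd : ∀ a b, w (a + b) = w a + w b) (p q : D) (μp μq : ℚ)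
    (hp : ∀ m ∈ p.coeff.support, μp ≤ w m) (hpa : ∃ m ∈ p.coeff.support, w m = μp)
    (hq : ∀ m ∈ q.coeff.support, μq ≤ w m) (hqa : ∃ m ∈ q.coeff.support, w m = μq) :
    ∃ m ∈ (p * q).coeff.support, w m = μp + μq := by
  classical
  set p₀ : D := AddMonoidAlgebra.ofCoeff (Finsupp.filter (fun m => w m = μp) p.coeff) with hp₀def
  set p₁ : D := AddMonoidAlgebra.ofCoeff (Finsupp.filter (fun m => ¬ w m = μp) p.coeff) with hp₁def
  set q₀ : D := AddMonoidAlgebra.ofCoeff (Finsupp.filter (fun m => w m = μq) q.coeff) with hq₀def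
  set q₁ : D := AddMonoidAlgebra.ofCoeff (Finsupp.filter (fun m => ¬ w m = μq) q.coeff) with hq₁def
  obtain ⟨mp, hmp, hmpe⟩ := hpa
  obtain ⟨mq, hmq, hmqe⟩ := hqa
  have hp₀ne : p₀ ≠ 0 := by
    intro h
    have : p₀.coeff mp = p.coeff mp := Finsupp.filter_apply_pos _ p.coeff hmpe
    rw [h] at this
    exact (Finsupp.mem_support_iff.mp hmp) (by simpa using this.symm)
  have hq₀ne : q₀ ≠ 0 := by
    intro h
    have : q₀.coeff mq = q.coeff mq := Finsupp.filter_apply_pos _ q.coeff hmqe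
    rw [h] at this
    exact (Finsupp.mem_support_iff.mp hmq) (by simpa using this.symm)
  have hD : NoZeroDivisors D := inferInstance
  have hpq₀ : p₀ * q₀ ≠ 0 := mul_ne_zero hp₀ne hq₀ne
  obtain ⟨m, hm⟩ := Finsupp.support_nonempty_iff.mpr (AddMonoidAlgebra.coeff_eq_zero.not.mpr hpq₀)
  -- m has weight μp + μq
  have hsuppp₀ : ∀ a ∈ p₀.coeff.support, a ∈ p.coeff.support ∧ w a = μp := by
    intro a ha
    rw [hp₀def, AddMonoidAlgebra.coeff_ofCoeff, Finsupp.support_filter, Finset.mem_filter] at ha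
    exact ⟨ha.1, ha.2⟩
  have hsuppq₀ : ∀ a ∈ q₀.coeff.support, a ∈ q.coeff.support ∧ w a = μq := by
    intro a ha
    rw [hq₀def, AddMonoidAlgebra.coeff_ofCoeff, Finsupp.support_filter, Finset.mem_filter] at ha
    exact ⟨ha.1, ha.2⟩
  have hsuppp₁ : ∀ a ∈ p₁.coeff.support, a ∈ p.coeff.support ∧ μp < w a := by
    intro a ha
    rw [hp₁def, AddMonoidAlgebra.coeff_ofCoeff, Finsupp.support_filter, Finset.mem_filter] at ha
    exact ⟨ha.1, lt_of_le_of_ne (hp a ha.1) (Ne.symm ha.2)⟩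
  have hsuppq₁ : ∀ a ∈ q₁.coeff.support, a ∈ q.coeff.support ∧ μq < w a := by
    intro a ha
    rw [hq₁def, AddMonoidAlgebra.coeff_ofCoeff, Finsupp.support_filter, Finset.mem_filter] at ha
    exact ⟨ha.1, lt_of_le_of_ne (hq a ha.1) (Ne.symm ha.2)⟩
  have hwm : w m = μp + μq := by
    obtain ⟨a, ha, b, hb, rfl⟩ := Finset.mem_add.mp (AddMonoidAlgebra.support_coeff_mul_subset p₀ q₀ hm)
    rw [hwadd, (hsuppp₀ a ha).2, (hsuppq₀ b hb).2]
  -- cross terms vanish at m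
  have hzero : ∀ r t : D, (∀ a ∈ r.coeff.support, ∀ b ∈ t.coeff.support, μp + μq < w a + w b) →
      (r * t).coeff m = 0 := by
    intro r t h
    by_contra hne
    obtain ⟨a, ha, b, hb, hab⟩ := Finset.mem_add.mp
      (AddMonoidAlgebra.support_coeff_mul_subset r t (Finsupp.mem_support_iff.mpr hne))
    have := h a ha b hb
    rw [← hwadd, hab, hwm] at this
    exact lt_irrefl _ this
  have hpdec : p = p₀ + p₁ := AddMonoidAlgebra.coeff_injective (by rw [AddMonoidAlgebra.coeff_add, hp₀def, hp₁def, AddMonoidAlgebra.coeff_ofCoeff, AddMonoidAlgebra.coeff_ofCoeff, Finsupp.filter_pos_add_filter_neg])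
  have hqdec : q = q₀ + q₁ := AddMonoidAlgebra.coeff_injective (by rw [AddMonoidAlgebra.coeff_add, hq₀def, hq₁def, AddMonoidAlgebra.coeff_ofCoeff, AddMonoidAlgebra.coeff_ofCoeff, Finsupp.filter_pos_add_filter_neg])
  refine ⟨m, ?_, hwm⟩
  rw [Finsupp.mem_support_iff]
  have hexp : p * q = p₀ * q₀ + (p₀ * q₁ + (p₁ * q₀ + p₁ * q₁)) := by
    rw [hpdec, hqdec]; ring
  have e1 : (p₀ * q₁).coeff m = 0 := hzero _ _ fun a ha b hb => by
    have h1 := (hsuppp₀ a ha).2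
    have h2 := (hsuppq₁ b hb).2
    linarith
  have e2 : (p₁ * q₀).coeff m = 0 := hzero _ _ fun a ha b hb => by
    have h1 := (hsuppp₁ a ha).2
    have h2 := (hsuppq₀ b hb).2
    linarith
  have e3 : (p₁ * q₁).coeff m = 0 := hzero _ _ fun a ha b hb => by
    have h1 := (hsuppp₁ a ha).2
    have h2 := (hsuppq₁ b hb).2
    linarith
  have addap : ∀ f g : D, ∀ x, (f + g).coeff x = f.coeff x + g.coeff x := fun f g x => rfl
  rw [hexp, addap, addap, addap, e1, e2, e3, add_zero, add_zero, add_zero]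
  exact Finsupp.mem_support_iff.mp hm

lemma pow_supp (hw0 : w 0 = 0) (hwadd : ∀ a b, w (a + b) = w a + w b)
    (s : D) (hs : s ≠ 0) (μ : ℚ)
    (hlb : ∀ m ∈ s.coeff.support, μ ≤ w m) (hat : ∃ m ∈ s.coeff.support, w m = μ) :
    ∀ i : ℕ, (∀ m ∈ (s ^ i).coeff.support, (i : ℚ) * μ ≤ w m) ∧
      ∃ m ∈ (s ^ i).coeff.support, w m = (i : ℚ) * μ := by
  intro i
  induction i with
  | zero =>
    constructor
    · intro m hm
      rw [pow_zero] at hm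
      have h1 : (1 : D) = AddMonoidAlgebra.single 0 1 := rfl
      rw [h1, AddMonoidAlgebra.coeff_single] at hm
      have := Finsupp.support_single_subset hm
      simp only [Finset.mem_singleton] at this
      subst this
      simp [hw0]
    · refine ⟨0, ?_, by simp [hw0]⟩
      rw [pow_zero]
      have h1 : (1 : D) = AddMonoidAlgebra.single 0 1 := rfl
      rw [h1, AddMonoidAlgebra.coeff_single, Finsupp.mem_support_iff, Finsupp.single_eq_same]
      exact one_ne_zero
  | succ i ih =>
    constructor
    · intro m hm
      rw [pow_succ] at hm
      have := mul_supp_lb w hwadd (s ^ i) s ((i : ℚ) * μ) μ ih.1 hlb m hm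
      push_cast
      linarith
    · obtain ⟨m, hm, hwm⟩ := mul_supp_attain w hwadd (s ^ i) s ((i : ℚ) * μ) μ
        ih.1 ih.2 hlb hat
      refine ⟨m, by rwa [pow_succ], by rw [hwm]; push_cast; ring⟩

lemma supp_nonneg_of_integral (hw0 : w 0 = 0) (hwadd : ∀ a b, w (a + b) = w a + w b)
    (s : D) (k : ℕ) (hk : 0 < k) (c : ℕ → D)
    (hc : ∀ i, i < k → ∀ m ∈ (c i).coeff.support, 0 ≤ w m)
    (heq : s ^ k = -∑ i ∈ Finset.range k, c i * s ^ i) :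
    ∀ m ∈ s.coeff.support, 0 ≤ w m := by
  by_cases hs : s = 0
  · intro m hm; rw [hs] at hm; simp at hm
  have hsupp : s.coeff.support.Nonempty := Finsupp.support_nonempty_iff.mpr (AddMonoidAlgebra.coeff_eq_zero.not.mpr hs)
  have hW : (s.coeff.support.image w).Nonempty := hsupp.image w
  set μ := (s.coeff.support.image w).min' hW with hμdef
  have hlb : ∀ m ∈ s.coeff.support, μ ≤ w m := fun m hm =>
    Finset.min'_le _ _ (Finset.mem_image_of_mem w hm)
  have hat : ∃ m ∈ s.coeff.support, w m = μ := by
    have := Finset.min'_mem (s.coeff.support.image w) hW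
    rw [Finset.mem_image] at this
    obtain ⟨m, hm, hwm⟩ := this
    exact ⟨m, hm, hwm⟩
  suffices hμ : 0 ≤ μ by
    intro m hm
    exact le_trans hμ (hlb m hm)
  by_contra hμ
  push_neg at hμ
  obtain ⟨m, hm, hwm⟩ := (pow_supp w hw0 hwadd s hs μ hlb hat k).2
  rw [heq, AddMonoidAlgebra.coeff_neg, Finsupp.support_neg, AddMonoidAlgebra.coeff_sum] at hm
  obtain ⟨i, hi, hmi⟩ := Finsupp.mem_support_finset_sum m hm
  rw [Finset.mem_range] at hi
  obtain ⟨a, ha, b, hb, hab⟩ := Finset.mem_add.mp (AddMonoidAlgebra.support_coeff_mul_subset _ _ hmi)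
  have hwa : 0 ≤ w a := hc i hi a ha
  have hwb : (i : ℚ) * μ ≤ w b := (pow_supp w hw0 hwadd s hs μ hlb hat i).1 b hb
  have hik : (i : ℚ) ≤ (k : ℚ) - 1 := by
    have : (i : ℚ) + 1 ≤ (k : ℚ) := by exact_mod_cast hi
    linarith
  have hmono : ((k : ℚ) - 1) * μ ≤ (i : ℚ) * μ := mul_le_mul_of_nonpos_right hik hμ.le
  have hsum : w m = w a + w b := by rw [← hab, hwadd]
  rw [hwm] at hsum
  -- k * μ = w a + w b ≥ 0 + (k-1) * μ  ⟹  μ ≥ 0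
  have : (k : ℚ) * μ ≥ ((k : ℚ) - 1) * μ := by linarith
  have : μ ≥ 0 := by nlinarith
  linarith

end Aux2


set_option maxHeartbeats 1000000 in
/-- Let `A = ⊕_{m∈σ^∨∩M} A_m χ^m ⊆ K₀[M]` be an `M`-graded normal domain
with weight cone `σ^∨` and let `L ⊆ σ^∨` be a polyhedral cone. Then the subalgebra
`A_L = ⊕_{m∈L∩M} A_m χ^m` is normal (integrally closed in its fraction field). -/
theorem stmt8 {n : ℕ}
    (K₀ : Type*) [Field K₀]
    (σ : Set (Fin n → ℚ)) (hσpoly : IsPolyhedralCone σ) (hσconv : IsStronglyConvex σ)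
    (Am : (Fin n → ℤ) → Set K₀)
    (S : Subring (AddMonoidAlgebra K₀ (Fin n → ℤ)))
    -- `S` is the `M`-graded subring with pieces `A_m ⊆ K₀`
    (hmem : ∀ f : AddMonoidAlgebra K₀ (Fin n → ℤ), f ∈ S ↔ ∀ m : Fin n → ℤ, f.coeff m ∈ Am m)
    -- all weights lie in the weight cone `σ^∨`
    (hsupp : ∀ m : Fin n → ℤ, Am m ≠ {0} → castZ m ∈ dualCone σ)
    -- `A` is normal
    (hnormal : IsIntegrallyClosed S)
    -- `L` is a polyhedral cone contained in `σ^∨`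
    (L : Set (Fin n → ℚ)) (hLpoly : IsPolyhedralCone L) (hL : L ⊆ dualCone σ)
    -- `T` is the graded subring `A_L = ⊕_{m ∈ L∩M} A_m χ^m`
    (T : Subring (AddMonoidAlgebra K₀ (Fin n → ℤ)))
    (hmemT : ∀ f : AddMonoidAlgebra K₀ (Fin n → ℤ),
      f ∈ T ↔ f ∈ S ∧ ∀ m : Fin n → ℤ, f.coeff m ≠ 0 → castZ m ∈ L) :
    IsIntegrallyClosed T := by
  classical
  letI : IsDomain (AddMonoidAlgebra K₀ (Fin n → ℤ)) := NoZeroDivisors.to_isDomain _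
  set D := AddMonoidAlgebra K₀ (Fin n → ℤ) with hD
  letI : IsDomain T := Subring.instIsDomainSubtypeMem T
  letI : IsDomain S := Subring.instIsDomainSubtypeMem S
  -- Key support lemma: an element of `S` integral over `T` has support in `L`.
  have key : ∀ sD : D, sD ∈ S → IsIntegral T sD → sD ∈ T := by
    intro sD hsD hInt
    rw [hmemT]
    refine ⟨hsD, ?_⟩
    intro m hm
    have hmsupp : m ∈ sD.coeff.support := Finsupp.mem_support_iff.mpr hm
    have hstep : ∀ v, (∀ u ∈ L, 0 ≤ pairQ u v) → 0 ≤ pairQ (castZ m) v := by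
      intro v hv
      obtain ⟨p, pm, hp⟩ := hInt
      set k := p.natDegree with hkdef
      have hk : 0 < k := by
        by_contra h0
        have hk0 : k = 0 := Nat.eq_zero_of_not_pos h0
        have hp1 : p = 1 := (Polynomial.Monic.natDegree_eq_zero pm).mp hk0
        rw [hp1] at hp
        simp at hp
      have heval := hp
      rw [Polynomial.eval₂_eq_sum_range, Finset.sum_range_succ, ← hkdef,
        pm.coeff_natDegree, map_one, one_mul] at heval
      have heq : sD ^ k =
          -∑ i ∈ Finset.range k, (fun i => algebraMap T D (p.coeff i)) i * sD ^ i :=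
        eq_neg_of_add_eq_zero_right heval
      set w : (Fin n → ℤ) → ℚ := fun m' => pairQ (castZ m') v with hw
      have hw0 : w 0 = 0 := by simp [hw, castZ, pairQ]
      have hwadd : ∀ a b, w (a + b) = w a + w b := by
        intro a b
        simp only [hw, castZ, pairQ, Pi.add_apply]
        rw [← Finset.sum_add_distrib]
        refine Finset.sum_congr rfl fun i _ => ?_
        push_cast
        ring
      have hcoeff : ∀ i, i < k →
          ∀ m' ∈ ((fun i => algebraMap T D (p.coeff i)) i).coeff.support, 0 ≤ w m' := by
        intro i _ m' hm'
        have hne : ((p.coeff i : T) : D).coeff m' ≠ 0 := Finsupp.mem_support_iff.mp hm'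
        have hmL : castZ m' ∈ L := ((hmemT ((p.coeff i : T) : D)).mp (p.coeff i).2).2 m' hne
        exact hv _ hmL
      exact Aux2.supp_nonneg_of_integral w hw0 hwadd sD k hk _ hcoeff heq m hmsupp
    obtain ⟨Q, hQ⟩ := hLpoly
    rcases Aux.farkas Q (castZ m) with hmem' | ⟨v, hvQ, hlt⟩
    · rw [hQ]
      exact hmem'
    · exfalso
      have hvL : ∀ u ∈ L, 0 ≤ pairQ u v := by
        intro u hu
        rw [hQ] at hu
        exact Aux.pairQ_nonneg_of_mem_coneHull hu (fun x hx => hvQ x hx)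
      linarith [hstep v hvL, hlt]
  set F := FractionRing D with hF
  set K := FractionRing T with hK
  set K' := FractionRing S with hK'
  letI algTF : Algebra T F := ((algebraMap D F).comp (Subring.subtype T)).toAlgebra
  letI algSF : Algebra S F := ((algebraMap D F).comp (Subring.subtype S)).toAlgebra
  have hTS : T ≤ S := fun x hx => ((hmemT x).mp hx).1
  have hTinj : Function.Injective ((algebraMap D F).comp (Subring.subtype T)) :=
    (IsFractionRing.injective D F).comp (fun a b h => Subtype.ext h)
  have hSinj : Function.Injective ((algebraMap D F).comp (Subring.subtype S)) :=
    (IsFractionRing.injective D F).comp (fun a b h => Subtype.ext h)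
  letI φ : K →+* F := IsFractionRing.lift hTinj
  letI ψ : K' →+* F := IsFractionRing.lift hSinj
  have hφ : ∀ t : T, φ (algebraMap T K t) = algebraMap D F (t : D) :=
    fun t => IsFractionRing.lift_algebraMap hTinj t
  have hψ : ∀ s : S, ψ (algebraMap S K' s) = algebraMap D F (s : D) :=
    fun s => IsFractionRing.lift_algebraMap hSinj s
  letI φ' : K →ₐ[T] F := { φ with commutes' := hφ }
  letI ψ' : K' →ₐ[S] F := { ψ with commutes' := hψ }
  rw [isIntegrallyClosed_iff K]
  intro x hx
  have hφx : IsIntegral T (φ' x) := by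
    obtain ⟨p, pm, hp⟩ := hx
    refine ⟨p, pm, ?_⟩
    have h2 := congrArg φ hp
    rw [Polynomial.hom_eval₂, map_zero] at h2
    have hc : φ.comp (algebraMap T K) = algebraMap T F := RingHom.ext hφ
    rw [hc] at h2
    exact h2
  have hSx : IsIntegral S (φ' x) := by
    obtain ⟨p, pm, hp⟩ := hφx
    refine ⟨p.map (Subring.inclusion hTS), pm.map _, ?_⟩
    rw [Polynomial.eval₂_map]
    have hcomp : (algebraMap S F).comp ((Subring.inclusion hTS : T →+* S)) = algebraMap T F :=
      RingHom.ext fun _ => rfl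
    rw [hcomp]
    exact hp
  obtain ⟨f, g, hg, hfg⟩ := IsFractionRing.div_surjective (A := T) x
  have hgD : (g : D) ≠ 0 := by
    intro h
    have : (g : T) = 0 := Subtype.ext h
    exact nonZeroDivisors.ne_zero hg this
  have hgS : (algebraMap S F) (Subring.inclusion hTS g) ≠ 0 := by
    show algebraMap D F (g : D) ≠ 0
    exact fun h => hgD (IsFractionRing.injective D F (h.trans (map_zero _).symm))
  have hgS' : Subring.inclusion hTS g ∈ nonZeroDivisors S := by
    refine mem_nonZeroDivisors_of_ne_zero ?_
    intro h
    apply hgD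
    have : ((Subring.inclusion hTS g : S) : D) = 0 := by rw [h]; rfl
    exact this
  set y : K' := IsLocalization.mk' K' (Subring.inclusion hTS f) ⟨Subring.inclusion hTS g, hgS'⟩
    with hy
  have hψy : ψ' y = φ' x := by
    have hspec := IsLocalization.mk'_spec K' (Subring.inclusion hTS f)
      ⟨Subring.inclusion hTS g, hgS'⟩
    have := congrArg ψ' hspec
    rw [map_mul] at this
    have h1 : ψ' (algebraMap S K' (Subring.inclusion hTS g)) = algebraMap D F (g : D) := hψ _
    have h2 : ψ' (algebraMap S K' (Subring.inclusion hTS f)) = algebraMap D F (f : D) := hψ _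
    rw [h1, h2] at this
    have hgne : algebraMap D F (g : D) ≠ 0 := fun h =>
      hgD (IsFractionRing.injective D F (h.trans (map_zero _).symm))
    have hx' : φ' x * algebraMap D F (g : D) = algebraMap D F (f : D) := by
      have : φ' x = algebraMap D F (f : D) / algebraMap D F (g : D) := by
        rw [← hfg, map_div₀]
        show φ (algebraMap T K f) / φ (algebraMap T K g) = _
        rw [hφ, hφ]
      rw [this, div_mul_cancel₀]
      exact hgne
    exact mul_right_cancel₀ hgne (this.trans hx'.symm)
  have hψinj : Function.Injective ψ' := ψ.injective
  have hyInt : IsIntegral S y := by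
    rw [← isIntegral_algHom_iff ψ' hψinj, hψy]
    exact hSx
  obtain ⟨s, hs⟩ := IsIntegrallyClosed.isIntegral_iff.mp hyInt
  have hφxs : φ' x = algebraMap D F (s : D) := by
    rw [← hψy, ← hs]
    exact hψ s
  letI ι : D →ₐ[T] F := { algebraMap D F with commutes' := fun _ => rfl }
  have hιinj : Function.Injective ι := IsFractionRing.injective D F
  have hsInt : IsIntegral T ((s : D)) := by
    rw [← isIntegral_algHom_iff ι hιinj]
    show IsIntegral T (algebraMap D F (s : D))
    rw [← hφxs]
    exact hφx
  have hsT : (s : D) ∈ T := key (s : D) s.2 hsInt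
  refine ⟨⟨(s : D), hsT⟩, ?_⟩
  apply φ.injective
  exact (hφ ⟨(s : D), hsT⟩).trans hφxs.symm
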